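/- arXiv:0812.2660 — 3 statements merged into one kernel-verified Lean document; each statement's English description precedes it below -/
import Mathlib

section
/- Let f = Σ_{u ∈ S} c_u t^u be a Laurent polynomial in n variables over ℂ with finite support S ⊆ ℤⁿ, and let z ∈ ℂⁿ. Suppose there is a partition S = S₁ ⊔ … ⊔ S_r such that Σ_{u ∈ S_i} c_u = 0 for each i, and ⟨u − v, z⟩ = 0 for all u, v ∈ S_i and all i. Then exp(tz) lies in the zero set of f for all t ∈ ℂ, i.e., z ∈ τ₁(V(f)). -/
/-- Let `f = Σ_{u ∈ S} c_u t^u` be a Laurent polynomial with finite support `S ⊆ ℤⁿ`.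
If there is a partition of `S` such that the coefficients sum to zero on each block and
`⟨u − v, z⟩ = 0` for all `u, v` in a common block, then the curve `t ↦ exp(tz)` lies
in the zero set of `f`, i.e. `z ∈ τ₁(V(f))`. -/
theorem mem_tau1_of_partition {n : ℕ} (S : Finset (Fin n → ℤ)) (c : (Fin n → ℤ) → ℂ)
    (z : Fin n → ℂ) (P : Finpartition S)
    (hsum : ∀ b ∈ P.parts, ∑ u ∈ b, c u = 0)
    (horth : ∀ b ∈ P.parts, ∀ u ∈ b, ∀ v ∈ b, ∑ j, ((u j : ℂ) - (v j : ℂ)) * z j = 0) :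
    ∀ t : ℂ, ∑ u ∈ S, c u * ∏ j, Complex.exp (t * z j) ^ (u j) = 0 := by
  intro t
  have hprod : ∀ u : Fin n → ℤ,
      (∏ j, Complex.exp (t * z j) ^ (u j)) = Complex.exp (∑ j, (u j : ℂ) * (t * z j)) := by
    intro u
    rw [Complex.exp_sum]
    exact Finset.prod_congr rfl fun j _ => (Complex.exp_int_mul _ _).symm
  have hS : S = P.parts.biUnion id := P.biUnion_parts.symm
  rw [hS, Finset.sum_biUnion P.supIndep.pairwiseDisjoint]
  apply Finset.sum_eq_zero
  intro b hb
  rcases b.eq_empty_or_nonempty with rfl | ⟨v, hv⟩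
  · simp
  · have hconst : ∀ u ∈ b, (∑ j, (u j : ℂ) * (t * z j)) = ∑ j, (v j : ℂ) * (t * z j) := by
      intro u hu
      have h := horth b hb u hu v hv
      have key : (∑ j, (u j : ℂ) * (t * z j)) - ∑ j, (v j : ℂ) * (t * z j)
          = t * ∑ j, ((u j : ℂ) - (v j : ℂ)) * z j := by
        rw [← Finset.sum_sub_distrib, Finset.mul_sum]
        apply Finset.sum_congr rfl; intros; ring
      have : (∑ j, (u j : ℂ) * (t * z j)) - ∑ j, (v j : ℂ) * (t * z j) = 0 := by
        rw [key, h, mul_zero]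
      exact sub_eq_zero.mp this
    calc (∑ u ∈ b, c u * ∏ j, Complex.exp (t * z j) ^ (u j))
        = ∑ u ∈ b, c u * Complex.exp (∑ j, (v j : ℂ) * (t * z j)) := by
          apply Finset.sum_congr rfl
          intro u hu
          rw [hprod u, hconst u hu]
      _ = (∑ u ∈ b, c u) * Complex.exp (∑ j, (v j : ℂ) * (t * z j)) := by
          rw [Finset.sum_mul]
      _ = 0 := by rw [hsum b hb, zero_mul]
end

section
/- Let f = Σ_{u ∈ S} c_u t^u be a Laurent polynomial over ℂ with finite support S ⊆ ℤⁿ, and z ∈ ℂⁿ with exp(tz) ∈ V(f) for all t ∈ ℂ. Then there exists a partition S = S₁ ⊔ … ⊔ S_r with Σ_{u ∈ S_i} c_u = 0 for each i and ⟨u − v, z⟩ = 0 for all u, v in the same block. -/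
open Finset

/-- The monoid hom `t ↦ exp (l * t)` from `Multiplicative ℂ` to `ℂ`. -/
noncomputable def expHom (l : ℂ) : Multiplicative ℂ →* ℂ where
  toFun t := Complex.exp (l * t.toAdd)
  map_one' := by simp
  map_mul' a b := by
    simp only [toAdd_mul]
    rw [mul_add, Complex.exp_add]

lemma expHom_injective : Function.Injective expHom := by
  intro l₁ l₂ h
  by_contra hne
  have hμ : l₁ - l₂ ≠ 0 := sub_ne_zero.mpr hne
  have := congrArg (fun f : Multiplicative ℂ →* ℂ =>
    f (Multiplicative.ofAdd ((Real.pi : ℂ) * Complex.I / (l₁ - l₂)))) h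
  simp only [expHom, MonoidHom.coe_mk, OneHom.coe_mk, toAdd_ofAdd] at this
  have h1 : Complex.exp ((l₁ - l₂) * ((Real.pi : ℂ) * Complex.I / (l₁ - l₂))) = 1 := by
    rw [sub_mul, Complex.exp_sub, this, div_self (Complex.exp_ne_zero _)]
  rw [mul_div_cancel₀ _ hμ, Complex.exp_pi_mul_I] at h1
  norm_num at h1

/-- Let `f = Σ_{u ∈ S} c_u t^u` be a Laurent polynomial with finite support `S ⊆ ℤⁿ`,
and suppose `exp(tz)` lies in the zero set of `f` for all `t ∈ ℂ`. Then there is a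
partition of `S` whose blocks have coefficient sum zero and satisfy `⟨u − v, z⟩ = 0`
for all `u, v` in a common block. -/
theorem exists_partition_of_mem_tau1 {n : ℕ} (S : Finset (Fin n → ℤ)) (c : (Fin n → ℤ) → ℂ)
    (z : Fin n → ℂ)
    (hz : ∀ t : ℂ, ∑ u ∈ S, c u * ∏ j, Complex.exp (t * z j) ^ (u j) = 0) :
    ∃ P : Finpartition S,
      (∀ b ∈ P.parts, ∑ u ∈ b, c u = 0) ∧
      (∀ b ∈ P.parts, ∀ u ∈ b, ∀ v ∈ b, ∑ j, ((u j : ℂ) - (v j : ℂ)) * z j = 0) := by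
  classical
  set key : (Fin n → ℤ) → ℂ := fun u => ∑ j, (u j : ℂ) * z j with hkey
  have hprod : ∀ (u : Fin n → ℤ) (t : ℂ),
      (∏ j, Complex.exp (t * z j) ^ (u j)) = Complex.exp (t * key u) := by
    intro u t
    have : ∀ j : Fin n, Complex.exp (t * z j) ^ (u j)
        = Complex.exp ((u j : ℂ) * (t * z j)) := by
      intro j; rw [Complex.exp_int_mul]
    rw [Finset.prod_congr rfl fun j _ => this j, ← Complex.exp_sum]
    congr 1
    rw [hkey, Finset.mul_sum]
    exact Finset.sum_congr rfl fun j _ => by ring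
  set T : Finset ℂ := S.image key with hT
  set g : ℂ → ℂ := fun a => ∑ u ∈ S.filter fun u => key u = a, c u with hg
  -- grouped vanishing
  have hz' : ∀ t : ℂ, ∑ a ∈ T, g a * Complex.exp (t * a) = 0 := by
    intro t
    have := hz t
    rw [← Finset.sum_fiberwise_of_maps_to (g := key) (t := T)
      (fun u hu => Finset.mem_image_of_mem key hu)
      (fun u => c u * ∏ j, Complex.exp (t * z j) ^ (u j))] at this
    rw [← this]
    refine Finset.sum_congr rfl fun a _ => ?_
    rw [hg, Finset.sum_mul]
    refine Finset.sum_congr rfl fun u hu => ?_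
    rw [hprod, (Finset.mem_filter.mp hu).2]
  -- linear independence of characters
  have li : LinearIndependent ℂ fun l : ℂ => (expHom l : Multiplicative ℂ → ℂ) :=
    (linearIndependent_monoidHom (Multiplicative ℂ) ℂ).comp expHom expHom_injective
  have hg0 : ∀ a ∈ T, g a = 0 := by
    refine linearIndependent_iff'.mp li T g ?_
    funext t
    have := hz' t.toAdd
    simpa [expHom, mul_comm] using this
  -- the partition by fibers of `key`
  refine ⟨⟨T.image fun a => S.filter fun u => key u = a, ?_, ?_, ?_⟩, ?_, ?_⟩
  · refine Finset.supIndep_iff_pairwiseDisjoint.mpr ?_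
    intro b₁ hb₁ b₂ hb₂ hne
    simp only [Finset.coe_image, Set.mem_image, Finset.mem_coe] at hb₁ hb₂
    obtain ⟨a₁, _, rfl⟩ := hb₁
    obtain ⟨a₂, _, rfl⟩ := hb₂
    refine Finset.disjoint_left.mpr fun u hu₁ hu₂ => ?_
    have h1 := (Finset.mem_filter.mp hu₁).2
    have h2 := (Finset.mem_filter.mp hu₂).2
    exact hne (by rw [← h1, h2])
  · ext u
    simp only [Finset.mem_sup, Finset.mem_image]
    constructor
    · rintro ⟨b, ⟨a, _, rfl⟩, hu⟩
      exact (Finset.mem_filter.mp hu).1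
    · intro hu
      exact ⟨S.filter fun v => key v = key u, ⟨key u, Finset.mem_image_of_mem key hu, rfl⟩,
        Finset.mem_filter.mpr ⟨hu, rfl⟩⟩
  · intro hbot
    simp only [Finset.mem_image] at hbot
    obtain ⟨a, ha, hfa⟩ := hbot
    obtain ⟨u, hu, rfl⟩ := Finset.mem_image.mp ha
    have : u ∈ S.filter fun v => key v = key u := Finset.mem_filter.mpr ⟨hu, rfl⟩
    rw [hfa] at this
    exact absurd this (Finset.notMem_empty u)
  · intro b hb
    simp only [Finset.mem_image] at hb
    obtain ⟨a, ha, rfl⟩ := hb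
    exact hg0 a ha
  · intro b hb u hu v hv
    simp only [Finset.mem_image] at hb
    obtain ⟨a, _, rfl⟩ := hb
    have h1 := (Finset.mem_filter.mp hu).2
    have h2 := (Finset.mem_filter.mp hv).2
    have : key u - key v = 0 := by rw [h1, h2, sub_self]
    rw [hkey] at this
    calc ∑ j, ((u j : ℂ) - (v j : ℂ)) * z j
        = (∑ j, (u j : ℂ) * z j) - ∑ j, (v j : ℂ) * z j := by
          rw [← Finset.sum_sub_distrib]; exact Finset.sum_congr rfl fun j _ => by ring
      _ = 0 := this
end

section
/- Let ν : ℤⁿ → ℤʳ and μ : ℤⁿ → ℤˢ be surjective group homomorphisms with kernels A and B respectively, and let k be an infinite field. Then the intersection ν*(Hom(ℤʳ, kˣ)) ∩ μ*(Hom(ℤˢ, kˣ)) inside Hom(ℤⁿ, kˣ) is finite if and only if ν*(Hom(ℤʳ, ℚ)) ∩ μ*(Hom(ℤˢ, ℚ)) = {0} inside Hom(ℤⁿ, ℚ). -/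
section Aux

/-- For surjective `ν`, the range of precomposition with `ν` consists exactly of the
homomorphisms vanishing on `ker ν`. -/
lemma range_comp_eq_aux {M : Type*} [AddCommGroup M] {n r : ℕ}
    (ν : (Fin n → ℤ) →+ (Fin r → ℤ)) (hν : Function.Surjective ν) :
    Set.range (fun f : (Fin r → ℤ) →+ M => f.comp ν) =
      {χ : (Fin n → ℤ) →+ M | ν.ker ≤ χ.ker} := by
  ext χ
  constructor
  · rintro ⟨f, rfl⟩ x hx
    have hx0 : ν x = 0 := hx
    simp [AddMonoidHom.mem_ker, AddMonoidHom.comp_apply, hx0]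
  · intro hχ
    obtain ⟨σ, hσ⟩ := Module.projective_lifting_property ν.toIntLinearMap
      (LinearMap.id (R := ℤ) (M := Fin r → ℤ)) hν
    refine ⟨χ.comp σ.toAddMonoidHom, ?_⟩
    apply AddMonoidHom.ext; intro x
    show χ (σ (ν x)) = χ x
    have h1 : ν (σ (ν x)) = ν x := LinearMap.ext_iff.mp hσ (ν x)
    have h2 : ν (σ (ν x) - x) = 0 := by rw [map_sub, h1, sub_self]
    have h3 : χ (σ (ν x) - x) = 0 := hχ h2
    rw [map_sub, sub_eq_zero] at h3
    exact h3

end Aux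

lemma key_hom_finite_iff {k : Type*} [Field k] [Infinite k] (Q : Type*) [AddCommGroup Q]
    [AddGroup.FG Q] :
    Finite (Q →+ Additive kˣ) ↔ ∀ φ : Q →+ ℚ, φ = 0 := by
  by_cases hQ : Finite Q
  · have he : 0 < Nat.card Q := Nat.card_pos
    constructor
    · intro _ φ
      ext q
      have h1 : Nat.card Q • φ q = 0 := by
        rw [← map_nsmul, card_nsmul_eq_zero', map_zero]
      have h2 : (Nat.card Q : ℚ) * φ q = 0 := by rwa [← nsmul_eq_mul]
      rcases mul_eq_zero.mp h2 with h | h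
      · exact absurd h (by exact_mod_cast he.ne')
      · simpa using h
    · intro _
      -- roots of unity are finite
      set e := Nat.card Q with hedef
      have hp : (Polynomial.X ^ e - Polynomial.C (1 : k)) ≠ 0 :=
        Polynomial.X_pow_sub_C_ne_zero he 1
      have hS : {x : k | x ^ e = 1}.Finite := by
        have := Polynomial.finite_setOf_isRoot hp
        convert this using 2 with x
        simp [Polynomial.IsRoot, sub_eq_zero]
      haveI : Finite {x : k | x ^ e = 1} := hS.to_subtype
      refine Finite.of_injective
        (fun f : Q →+ Additive kˣ =>
          (fun q => ⟨((Additive.toMul (f q) : kˣ) : k), ?_⟩ : Q → {x : k | x ^ e = 1}))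
        ?_
      · show ((Additive.toMul (f q) : kˣ) : k) ^ e = 1
        have hq : e • q = 0 := card_nsmul_eq_zero'
        have hfq : e • f q = 0 := by rw [← map_nsmul, hq, map_zero]
        have h0 : (Additive.toMul (f q) : kˣ) ^ e = 1 := by
          rw [← toMul_nsmul, hfq]; rfl
        rw [← Units.val_pow_eq_pow_val, h0, Units.val_one]
      · intro f g hfg
        ext q
        have := congrFun hfg q
        simp only [Subtype.mk.injEq] at this
        exact this
  · haveI hQ' : Infinite Q := not_finite_iff_infinite.mp hQ
    obtain ⟨m, ι, fι, p, hp, ex, ⟨f⟩⟩ := AddCommGroup.equiv_free_prod_directSum_zmod Q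
    have hm : m ≠ 0 := by
      rintro rfl
      haveI : ∀ i, NeZero (p i ^ ex i) := fun i => ⟨pow_ne_zero _ (hp i).pos.ne'⟩
      haveI : Finite (DirectSum ι fun i => ZMod (p i ^ ex i)) :=
        Finite.of_equiv _ (DFinsupp.equivFunOnFintype).symm
      haveI : Finite ((Fin 0 →₀ ℤ) × DirectSum ι fun i => ZMod (p i ^ ex i)) := inferInstance
      exact absurd (Finite.of_equiv _ f.symm.toEquiv) hQ
    set i0 := (⟨0, Nat.pos_of_ne_zero hm⟩ : Fin m)
    set π : Q →+ ℤ :=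
      ((Finsupp.applyAddHom i0).comp ((AddMonoidHom.fst _ _).comp f.toAddMonoidHom))
    have hπ : Function.Surjective π := by
      intro a
      refine ⟨f.symm (Finsupp.single i0 a, 0), ?_⟩
      simp [π, Finsupp.applyAddHom]
    obtain ⟨q1, hq1⟩ := hπ 1
    refine iff_of_false ?_ ?_
    · intro hfin
      haveI : Infinite {a : k // a ≠ 0} := by
        have h0 : ({0}ᶜ : Set k).Infinite := (Set.finite_singleton 0).infinite_compl
        exact h0.to_subtype
      haveI : Infinite kˣ :=
        Infinite.of_injective (fun x : {a : k // a ≠ 0} => unitsEquivNeZero.symm x)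
          (Equiv.injective _)
      have : Function.Injective (fun x : kˣ =>
          ((zmultiplesHom (Additive kˣ) (Additive.ofMul x)).comp π : Q →+ Additive kˣ)) := by
        intro x y hxy
        have := congrArg (fun F : Q →+ Additive kˣ => F q1) hxy
        simp only [AddMonoidHom.comp_apply, hq1, zmultiplesHom_apply, one_zsmul] at this
        exact Additive.ofMul.injective this
      haveI := Infinite.of_injective _ this
      haveI := hfin
      exact not_finite (Q →+ Additive kˣ)
    · intro hall
      have := congrArg (fun F : Q →+ ℚ => F q1) (hall ((Int.castAddHom ℚ).comp π))
      simp [hq1] at this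

lemma comp_mk'_injective_aux {G M : Type*} [AddCommGroup G] [AddCommGroup M]
    (C : AddSubgroup G) :
    Function.Injective
      (fun φ : (G ⧸ C) →+ M => φ.comp (QuotientAddGroup.mk' C)) := by
  intro φ ψ h
  ext x
  exact DFunLike.congr_fun h x

lemma range_comp_mk'_aux {G M : Type*} [AddCommGroup G] [AddCommGroup M]
    (C : AddSubgroup G) :
    Set.range (fun φ : (G ⧸ C) →+ M => φ.comp (QuotientAddGroup.mk' C)) =
      {χ : G →+ M | C ≤ χ.ker} := by
  ext χ
  constructor
  · rintro ⟨φ, rfl⟩ x hx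
    have : (QuotientAddGroup.mk' C) x = 0 := (QuotientAddGroup.eq_zero_iff x).mpr hx
    simp [AddMonoidHom.mem_ker, AddMonoidHom.comp_apply, this]
  · intro hχ
    refine ⟨QuotientAddGroup.lift C χ hχ, ?_⟩
    ext x
    simp

lemma inter_eq_aux {M : Type*} [AddCommGroup M] {n r s : ℕ}
    (ν : (Fin n → ℤ) →+ (Fin r → ℤ)) (μ : (Fin n → ℤ) →+ (Fin s → ℤ))
    (hν : Function.Surjective ν) (hμ : Function.Surjective μ) :
    Set.range (fun f : (Fin r → ℤ) →+ M => f.comp ν) ∩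
        Set.range (fun g : (Fin s → ℤ) →+ M => g.comp μ) =
      Set.range (fun φ : ((Fin n → ℤ) ⧸ (ν.ker ⊔ μ.ker)) →+ M =>
        φ.comp (QuotientAddGroup.mk' (ν.ker ⊔ μ.ker))) := by
  rw [range_comp_eq_aux ν hν, range_comp_eq_aux μ hμ, range_comp_mk'_aux]
  ext χ
  simp [Set.mem_setOf_eq, sup_le_iff]

/-- Let `ν : ℤⁿ → ℤʳ` and `μ : ℤⁿ → ℤˢ` be surjective homomorphisms and `k` an
infinite field. The intersection of the pullbacks `ν*(Hom(ℤʳ, kˣ))` and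
`μ*(Hom(ℤˢ, kˣ))` inside `Hom(ℤⁿ, kˣ)` is finite iff the intersection of the
pullbacks `ν*(Hom(ℤʳ, ℚ))` and `μ*(Hom(ℤˢ, ℚ))` inside `Hom(ℤⁿ, ℚ)` is `{0}`. -/
theorem pullback_char_tori_finite_iff {k : Type*} [Field k] [Infinite k]
    {n r s : ℕ} (ν : (Fin n → ℤ) →+ (Fin r → ℤ)) (μ : (Fin n → ℤ) →+ (Fin s → ℤ))
    (hν : Function.Surjective ν) (hμ : Function.Surjective μ) :
    (Set.range (fun f : (Fin r → ℤ) →+ Additive kˣ => f.comp ν) ∩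
        Set.range (fun g : (Fin s → ℤ) →+ Additive kˣ => g.comp μ)).Finite ↔
      Set.range (fun f : (Fin r → ℤ) →+ ℚ => f.comp ν) ∩
        Set.range (fun g : (Fin s → ℤ) →+ ℚ => g.comp μ) = {0} := by
  haveI : AddGroup.FG (Fin n → ℤ) := Module.Finite.iff_addGroup_fg.mp inferInstance
  set C : AddSubgroup (Fin n → ℤ) := ν.ker ⊔ μ.ker with hC
  rw [inter_eq_aux ν μ hν hμ, inter_eq_aux ν μ hν hμ]
  have h1 : (Set.range (fun φ : ((Fin n → ℤ) ⧸ C) →+ Additive kˣ =>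
      φ.comp (QuotientAddGroup.mk' C))).Finite ↔
      Finite (((Fin n → ℤ) ⧸ C) →+ Additive kˣ) := by
    constructor
    · intro h
      haveI := h.to_subtype
      exact Finite.of_equiv _ (Equiv.ofInjective _ (comp_mk'_injective_aux C)).symm
    · intro h
      exact Set.finite_range _
  rw [h1, key_hom_finite_iff]
  constructor
  · intro h
    ext χ
    simp only [Set.mem_range, Set.mem_singleton_iff]
    constructor
    · rintro ⟨φ, rfl⟩
      rw [h φ]
      ext x; simp
    · rintro rfl
      exact ⟨0, by ext x; simp⟩
  · intro h φ
    apply comp_mk'_injective_aux C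
    have hmem : φ.comp (QuotientAddGroup.mk' C) ∈
        Set.range (fun ψ : ((Fin n → ℤ) ⧸ C) →+ ℚ => ψ.comp (QuotientAddGroup.mk' C)) :=
      ⟨φ, rfl⟩
    rw [h] at hmem
    simp only [Set.mem_singleton_iff] at hmem
    show φ.comp (QuotientAddGroup.mk' C) =
      (0 : ((Fin n → ℤ) ⧸ C) →+ ℚ).comp (QuotientAddGroup.mk' C)
    rw [hmem]
    ext x; simp
end
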